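/- (Arden's lemma for trees, uniqueness part.) Let A and B be two tree languages over a graded alphabet Σ and let c be a symbol in Σ_0 such that the single-node tree c does not belong to A. Then A^{*_c} ·_c B is the unique tree language L over Σ satisfying L = A ·_c L ∪ B. -/
import Mathlib


attribute [local instance] Classical.propDecidable

/-- Trees over a graded alphabet: symbols `α` with arity function `ar`. -/
inductive GTree (α : Type) (ar : α → ℕ) : Type
  | node (f : α) (children : Fin (ar f) → GTree α ar) : GTree α ar

namespace GTree

variable {α : Type} {ar : α → ℕ}

/-- The `c`-product of a tree with a tree language. -/
def cprod (c : α) : GTree α ar → Set (GTree α ar) → Set (GTree α ar)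
  | node f ch, L =>
    if f = c then L
    else { s | ∃ ch' : Fin (ar f) → GTree α ar,
            s = node f ch' ∧ ∀ i, ch' i ∈ cprod c (ch i) L }

/-- The `c`-product of two tree languages. -/
def lprod (c : α) (L L' : Set (GTree α ar)) : Set (GTree α ar) :=
  ⋃ t ∈ L, cprod c t L'

/-- The single-node tree `c`, for `c` of rank 0. -/
def leaf (c : α) (hc : ar c = 0) : GTree α ar :=
  node c (fun i => (i.cast hc).elim0)

/-- The iterated `c`-product `L^{n,c}`. -/
def iterProd (c : α) (hc : ar c = 0) (L : Set (GTree α ar)) : ℕ → Set (GTree α ar)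
  | 0 => {leaf c hc}
  | n + 1 => iterProd c hc L n ∪ lprod c L (iterProd c hc L n)

/-- The `c`-closure `L^{*_c}`. -/
def closure (c : α) (hc : ar c = 0) (L : Set (GTree α ar)) : Set (GTree α ar) :=
  ⋃ n, iterProd c hc L n

/-- The symbol `a` occurs (appears) in the tree. -/
def occurs (a : α) : GTree α ar → Prop
  | node f ch => f = a ∨ ∃ i, occurs a (ch i)

end GTree

namespace GTree

variable {α : Type} {ar : α → ℕ}

/-- Size of a tree. -/
def gsize : GTree α ar → ℕ
  | node _ ch => 1 + ∑ i, gsize (ch i)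

lemma gsize_node (f : α) (ch : Fin (ar f) → GTree α ar) :
    gsize (node f ch) = 1 + ∑ i, gsize (ch i) := rfl

lemma node_c_eq_leaf (c : α) (hc : ar c = 0) (ch : Fin (ar c) → GTree α ar) :
    node c ch = leaf c hc := by
  unfold leaf
  congr 1
  funext i
  exact absurd i.isLt (by omega)

lemma cprod_node (c f : α) (ch : Fin (ar f) → GTree α ar) (L : Set (GTree α ar)) :
    cprod c (node f ch) L =
      if f = c then L
      else { s | ∃ ch' : Fin (ar f) → GTree α ar,
            s = node f ch' ∧ ∀ i, ch' i ∈ cprod c (ch i) L } := rfl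

lemma cprod_leaf (c : α) (hc : ar c = 0) (L : Set (GTree α ar)) :
    cprod c (leaf c hc) L = L := by
  unfold leaf
  rw [cprod_node, if_pos rfl]

lemma cprod_mono (c : α) (t : GTree α ar) {L L' : Set (GTree α ar)} (h : L ⊆ L') :
    cprod c t L ⊆ cprod c t L' := by
  induction t with
  | node f ch ih =>
    by_cases hf : f = c
    · rw [cprod_node, if_pos hf, cprod_node, if_pos hf]; exact h
    · rw [cprod_node, if_neg hf, cprod_node, if_neg hf]
      rintro s ⟨ch', rfl, hch⟩
      exact ⟨ch', rfl, fun i => ih i (hch i)⟩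

lemma mem_lprod {c : α} {L L' : Set (GTree α ar)} {t : GTree α ar} :
    t ∈ lprod c L L' ↔ ∃ s ∈ L, t ∈ cprod c s L' := by
  simp [lprod]

lemma lprod_mono {c : α} {A A' B B' : Set (GTree α ar)} (hA : A ⊆ A') (hB : B ⊆ B') :
    lprod c A B ⊆ lprod c A' B' := by
  intro t ht
  obtain ⟨s, hs, ht⟩ := mem_lprod.1 ht
  exact mem_lprod.2 ⟨s, hA hs, cprod_mono c s hB ht⟩

lemma cprod_assoc (c : α) (t : GTree α ar) (L L' : Set (GTree α ar)) :
    cprod c t (lprod c L L') = ⋃ s ∈ cprod c t L, cprod c s L' := by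
  induction t with
  | node f ch ih =>
    by_cases hf : f = c
    · simp only [cprod_node, if_pos hf]
      rfl
    · ext u
      rw [cprod_node, if_neg hf]
      constructor
      · rintro ⟨ch', rfl, hch⟩
        have key : ∀ i, ∃ s, s ∈ cprod c (ch i) L ∧ ch' i ∈ cprod c s L' := by
          intro i
          have h2 := hch i
          rw [ih i] at h2
          simpa using h2
        choose s hs hs' using key
        refine Set.mem_iUnion₂.2 ⟨node f s, ?_, ?_⟩
        · rw [cprod_node, if_neg hf]; exact ⟨s, rfl, hs⟩
        · rw [cprod_node, if_neg hf]; exact ⟨ch', rfl, hs'⟩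
      · intro hu
        obtain ⟨s, hsmem, hu⟩ := Set.mem_iUnion₂.1 hu
        rw [cprod_node, if_neg hf] at hsmem
        obtain ⟨ch'', rfl, hch''⟩ := hsmem
        rw [cprod_node, if_neg hf] at hu
        obtain ⟨ch', rfl, hch'⟩ := hu
        refine ⟨ch', rfl, fun i => ?_⟩
        rw [ih i]
        exact Set.mem_iUnion₂.2 ⟨ch'' i, hch'' i, hch' i⟩

lemma lprod_assoc (c : α) (A C B : Set (GTree α ar)) :
    lprod c (lprod c A C) B = lprod c A (lprod c C B) := by
  ext t
  rw [mem_lprod, mem_lprod]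
  constructor
  · rintro ⟨s, hs, ht⟩
    obtain ⟨a, ha, hs⟩ := mem_lprod.1 hs
    refine ⟨a, ha, ?_⟩
    rw [cprod_assoc]
    exact Set.mem_iUnion₂.2 ⟨s, hs, ht⟩
  · rintro ⟨a, ha, ht⟩
    rw [cprod_assoc] at ht
    obtain ⟨s, hs, ht⟩ := Set.mem_iUnion₂.1 ht
    exact ⟨s, mem_lprod.2 ⟨a, ha, hs⟩, ht⟩

lemma cprod_iUnion_chain (c : α) (t : GTree α ar) (S : ℕ → Set (GTree α ar))
    (hmono : Monotone S) : cprod c t (⋃ n, S n) ⊆ ⋃ n, cprod c t (S n) := by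
  induction t with
  | node f ch ih =>
    by_cases hf : f = c
    · rw [cprod_node, if_pos hf]
      intro u hu
      simpa only [cprod_node, if_pos hf] using hu
    · rw [cprod_node, if_neg hf]
      rintro u ⟨ch', rfl, hch⟩
      have key : ∀ i, ∃ n, ch' i ∈ cprod c (ch i) (S n) := by
        intro i
        have h2 := ih i (hch i)
        simpa using h2
      choose n hn using key
      refine Set.mem_iUnion.2 ⟨Finset.univ.sup n, ?_⟩
      rw [cprod_node, if_neg hf]
      exact ⟨ch', rfl, fun i =>
        cprod_mono c (ch i) (hmono (Finset.le_sup (Finset.mem_univ i))) (hn i)⟩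

lemma iterProd_mono (c : α) (hc : ar c = 0) (L : Set (GTree α ar)) :
    Monotone (iterProd c hc L) :=
  monotone_nat_of_le_succ (fun _ => Set.subset_union_left)

lemma iterProd_subset_closure (c : α) (hc : ar c = 0) (L : Set (GTree α ar)) (n : ℕ) :
    iterProd c hc L n ⊆ closure c hc L :=
  Set.subset_iUnion _ n

lemma leaf_mem_closure (c : α) (hc : ar c = 0) (L : Set (GTree α ar)) :
    leaf c hc ∈ closure c hc L :=
  iterProd_subset_closure c hc L 0 rfl

lemma lprod_closure_subset (c : α) (hc : ar c = 0) (A : Set (GTree α ar)) :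
    lprod c A (closure c hc A) ⊆ closure c hc A := by
  intro t ht
  obtain ⟨a, ha, ht⟩ := mem_lprod.1 ht
  have h2 := cprod_iUnion_chain c a _ (iterProd_mono c hc A) ht
  obtain ⟨n, hn⟩ := Set.mem_iUnion.1 h2
  exact iterProd_subset_closure c hc A (n + 1) (Or.inr (mem_lprod.2 ⟨a, ha, hn⟩))

lemma cprod_size (c : α) (t : GTree α ar) (u : GTree α ar) (L : Set (GTree α ar))
    (h : u ∈ cprod c t L) : u ∈ cprod c t {s ∈ L | gsize s ≤ gsize u} := by
  induction t generalizing u with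
  | node f ch ih =>
    by_cases hf : f = c
    · rw [cprod_node, if_pos hf] at h ⊢
      exact ⟨h, le_refl _⟩
    · rw [cprod_node, if_neg hf] at h ⊢
      obtain ⟨ch', rfl, hch⟩ := h
      refine ⟨ch', rfl, fun i => ?_⟩
      have h1 := ih i (ch' i) (hch i)
      refine cprod_mono c (ch i) ?_ h1
      rintro s ⟨hs1, hs2⟩
      refine ⟨hs1, hs2.trans ?_⟩
      rw [gsize_node]
      have hle : gsize (ch' i) ≤ ∑ j, gsize (ch' j) := by
        simpa using Finset.single_le_sum (f := fun j => gsize (ch' j))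
          (fun _ _ => Nat.zero_le _) (Finset.mem_univ i)
      omega

lemma cprod_size_lt (c f : α) (hf : f ≠ c) (ch : Fin (ar f) → GTree α ar)
    (u : GTree α ar) (L : Set (GTree α ar)) (h : u ∈ cprod c (node f ch) L) :
    u ∈ cprod c (node f ch) {s ∈ L | gsize s < gsize u} := by
  rw [cprod_node, if_neg hf] at h ⊢
  obtain ⟨ch', rfl, hch⟩ := h
  refine ⟨ch', rfl, fun i => ?_⟩
  have h1 := cprod_size c (ch i) (ch' i) L (hch i)
  refine cprod_mono c (ch i) ?_ h1
  rintro s ⟨hs1, hs2⟩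
  refine ⟨hs1, lt_of_le_of_lt hs2 ?_⟩
  rw [gsize_node]
  have hle : gsize (ch' i) ≤ ∑ j, gsize (ch' j) := by
    simpa using Finset.single_le_sum (f := fun j => gsize (ch' j))
      (fun _ _ => Nat.zero_le _) (Finset.mem_univ i)
  omega

end GTree

open GTree in
/-- Arden's lemma for trees, uniqueness part: if the single-node
tree `c` does not belong to `A`, then `A^{*_c} ·_c B` is the unique tree
language `L` satisfying `L = A ·_c L ∪ B`. -/
theorem arden_unique {α : Type} {ar : α → ℕ} (c : α) (hc : ar c = 0)
    (A B : Set (GTree α ar)) (hcA : GTree.leaf c hc ∉ A) :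
    (GTree.lprod c (GTree.closure c hc A) B =
        GTree.lprod c A (GTree.lprod c (GTree.closure c hc A) B) ∪ B) ∧
      ∀ L : Set (GTree α ar), L = GTree.lprod c A L ∪ B →
        L = GTree.lprod c (GTree.closure c hc A) B := by
  -- the fixed point property
  have hB : B ⊆ lprod c (closure c hc A) B := by
    intro t ht
    refine mem_lprod.2 ⟨leaf c hc, leaf_mem_closure c hc A, ?_⟩
    rw [cprod_leaf]
    exact ht
  have hfix : lprod c (closure c hc A) B =
      lprod c A (lprod c (closure c hc A) B) ∪ B := by
    apply Set.Subset.antisymm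
    · intro t ht
      obtain ⟨s, hs, ht⟩ := mem_lprod.1 ht
      obtain ⟨n, hn⟩ := Set.mem_iUnion.1 hs
      clear hs
      induction n generalizing s with
      | zero =>
        right
        rw [show s = leaf c hc from hn, cprod_leaf] at ht
        exact ht
      | succ n ih =>
        rcases hn with hn | hn
        · exact ih s ht hn
        · left
          obtain ⟨a, ha, hn⟩ := mem_lprod.1 hn
          refine mem_lprod.2 ⟨a, ha, ?_⟩
          have h2 : t ∈ cprod c a (lprod c (iterProd c hc A n) B) := by
            rw [cprod_assoc]
            exact Set.mem_iUnion₂.2 ⟨s, hn, ht⟩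
          exact cprod_mono c a
            (lprod_mono (iterProd_subset_closure c hc A n) (le_refl B)) h2
    · rintro t (ht | ht)
      · rw [← lprod_assoc] at ht
        exact lprod_mono (lprod_closure_subset c hc A) (le_refl B) ht
      · exact hB ht
  refine ⟨hfix, fun L hL => ?_⟩
  apply Set.Subset.antisymm
  · -- L ⊆ lprod closure B, by strong induction on size
    have main : ∀ n : ℕ, ∀ t : GTree α ar, gsize t ≤ n → t ∈ L →
        t ∈ lprod c (closure c hc A) B := by
      intro n
      induction n with
      | zero =>
        intro t hsz _
        obtain ⟨f, ch⟩ := t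
        rw [gsize_node] at hsz
        omega
      | succ n ih =>
        intro t hsz htL
        rw [hL] at htL
        rcases htL with htL | htL
        · obtain ⟨a, ha, htL⟩ := mem_lprod.1 htL
          obtain ⟨f, ch⟩ := a
          have hf : f ≠ c := by
            rintro rfl
            exact hcA ((node_c_eq_leaf f hc ch) ▸ ha)
          have h2 := cprod_size_lt c f hf ch t L htL
          have h3 : t ∈ cprod c (GTree.node f ch) (lprod c (closure c hc A) B) := by
            refine cprod_mono c (GTree.node f ch) ?_ h2
            rintro s ⟨hs1, hs2⟩
            exact ih s (by omega) hs1
          have h4 : t ∈ lprod c A (lprod c (closure c hc A) B) :=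
            mem_lprod.2 ⟨GTree.node f ch, ha, h3⟩
          rw [hfix]
          exact Or.inl h4
        · exact hB htL
    intro t ht
    exact main (gsize t) t (le_refl _) ht
  · -- lprod closure B ⊆ L : show lprod (iterProd n) B ⊆ L for all n
    have main : ∀ n : ℕ, lprod c (iterProd c hc A n) B ⊆ L := by
      intro n
      induction n with
      | zero =>
        intro t ht
        obtain ⟨s, hs, ht⟩ := mem_lprod.1 ht
        rw [show s = leaf c hc from hs, cprod_leaf] at ht
        rw [hL]
        exact Or.inr ht
      | succ n ih =>
        intro t ht
        obtain ⟨s, hs, ht⟩ := mem_lprod.1 ht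
        rcases hs with hs | hs
        · exact ih (mem_lprod.2 ⟨s, hs, ht⟩)
        · have h2 : t ∈ lprod c (lprod c A (iterProd c hc A n)) B :=
            mem_lprod.2 ⟨s, hs, ht⟩
          rw [lprod_assoc] at h2
          obtain ⟨a, ha, h2⟩ := mem_lprod.1 h2
          have h3 : t ∈ cprod c a L :=
            cprod_mono c a ih h2
          rw [hL]
          exact Or.inl (mem_lprod.2 ⟨a, ha, h3⟩)
    intro t ht
    obtain ⟨s, hs, ht⟩ := mem_lprod.1 ht
    obtain ⟨n, hn⟩ := Set.mem_iUnion.1 hs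
    exact main n (mem_lprod.2 ⟨s, hn, ht⟩)
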